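/- Let G be a finite directed flow network with three terminals a, b, c. Define H to be the star network on vertices {a, b, c, d} with, for each terminal q, an edge from q to d of capacity (q ↛ {a,b,c}∖{q}) and an edge from d to q of capacity ({a,b,c}∖{q} ↛ q), where all min-cut values are measured in G. Then for every partition of {a,b,c} into nonempty sets S, T, the minimum cut value (S ↛ T) in H equals (S ↛ T) in G; consequently H realizes exactly the same external flows as G. -/

import Mathlib

open Finset

/-- Capacity of the cut determined by vertex set `A`: total capacity of edges leaving `A`. -/
def cutCap {V : Type} [Fintype V] [DecidableEq V] (c : V → V → ℝ) (A : Finset V) : ℝ :=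
  ∑ u ∈ A, ∑ v ∈ Aᶜ, c u v

/-- Minimum capacity of a cut with all of `S` on the source side and all of `T` on the sink side. -/
noncomputable def minCut {V : Type} [Fintype V] [DecidableEq V] (c : V → V → ℝ) (S T : Finset V) : ℝ :=
  sInf {x : ℝ | ∃ A : Finset V, S ⊆ A ∧ Disjoint T A ∧ x = cutCap c A}

/-- Net outflow of `f` at vertex `v`. -/
def netOut {V : Type} [Fintype V] (f : V → V → ℝ) (v : V) : ℝ :=
  (∑ w, f v w) - ∑ w, f w v

/-- `f` is an external flow in the network with capacities `c`, terminals `q` and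
terminal net-outflow values `x`. -/
def IsExtFlow {V : Type} [Fintype V] {k : ℕ} (c f : V → V → ℝ) (q : Fin k → V)
    (x : Fin k → ℝ) : Prop :=
  (∀ u v, 0 ≤ f u v ∧ f u v ≤ c u v) ∧
  (∀ v, (∀ i, q i ≠ v) → netOut f v = 0) ∧
  (∀ i, netOut f (q i) = x i)

/-- The star mimicking network on vertices `{a,b,c,d}` (as `Fin 4`, with `d = 3`):
for each terminal `q` an edge `q → d` of capacity `q ↛ rest` and an edge
`d → q` of capacity `rest ↛ q`, measured in `G`. -/
noncomputable def starCap {V : Type} [Fintype V] [DecidableEq V] (c : V → V → ℝ) (t : Fin 3 → V) :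
    Fin 4 → Fin 4 → ℝ := fun u v =>
  if hu : u.val < 3 then
    if v = 3 then
      minCut c {t ⟨u.val, hu⟩} ((Finset.univ.image t) \ {t ⟨u.val, hu⟩})
    else 0
  else if hv : v.val < 3 then
    minCut c ((Finset.univ.image t) \ {t ⟨v.val, hv⟩}) {t ⟨v.val, hv⟩}
  else 0

section StmtAux
set_option linter.unusedSectionVars false
variable {V : Type} [Fintype V] [DecidableEq V]
lemma cutCap_nonneg (c : V → V → ℝ) (hc : ∀ u v, 0 ≤ c u v) (A : Finset V) :
    0 ≤ cutCap c A :=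
  Finset.sum_nonneg fun _ _ => Finset.sum_nonneg fun _ _ => hc _ _

lemma cutCap_eq_sum_ite (c : V → V → ℝ) (A : Finset V) :
    cutCap c A = ∑ u, ∑ v, if u ∈ A ∧ v ∉ A then c u v else 0 := by
  rw [cutCap]
  rw [← Finset.sum_filter_add_sum_filter_not Finset.univ (· ∈ A)
      (fun u => ∑ v, if u ∈ A ∧ v ∉ A then c u v else 0)]
  have h1 : ∀ u ∈ A, (∑ v ∈ Aᶜ, c u v) = ∑ v, if u ∈ A ∧ v ∉ A then c u v else 0 := by
    intro u hu
    simp only [hu, true_and]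
    rw [show Aᶜ = Finset.univ.filter (· ∉ A) by ext; simp, Finset.sum_filter]
  rw [Finset.sum_congr rfl h1]
  have h2 : (∑ u ∈ Finset.univ.filter (· ∉ A), ∑ v, if u ∈ A ∧ v ∉ A then c u v else 0) = 0 := by
    apply Finset.sum_eq_zero; intro u hu
    simp only [Finset.mem_filter] at hu
    apply Finset.sum_eq_zero; intro v _
    simp [hu.2]
  rw [h2, add_zero]
  apply Finset.sum_congr
  · ext u; simp
  · intro u hu; rfl

lemma minCut_set_finite (c : V → V → ℝ) (S T : Finset V) :
    {x : ℝ | ∃ A : Finset V, S ⊆ A ∧ Disjoint T A ∧ x = cutCap c A}.Finite := by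
  have : {x : ℝ | ∃ A : Finset V, S ⊆ A ∧ Disjoint T A ∧ x = cutCap c A}
      ⊆ (fun A : Finset V => cutCap c A) '' Set.univ := by
    rintro x ⟨A, _, _, rfl⟩; exact ⟨A, Set.mem_univ _, rfl⟩
  exact Set.Finite.subset (Set.finite_univ.image _) this

lemma minCut_le (c : V → V → ℝ) {S T A : Finset V} (hS : S ⊆ A) (hT : Disjoint T A) :
    minCut c S T ≤ cutCap c A := by
  apply csInf_le ((minCut_set_finite c S T).bddBelow)
  exact ⟨A, hS, hT, rfl⟩

lemma minCut_nonneg (c : V → V → ℝ) (hc : ∀ u v, 0 ≤ c u v) (S T : Finset V) :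
    0 ≤ minCut c S T := by
  apply Real.sInf_nonneg
  rintro x ⟨A, _, _, rfl⟩; exact cutCap_nonneg c hc A

lemma minCut_exists (c : V → V → ℝ) {S T : Finset V} (hd : Disjoint S T) :
    ∃ A : Finset V, S ⊆ A ∧ Disjoint T A ∧ minCut c S T = cutCap c A := by
  have hne : {x : ℝ | ∃ A : Finset V, S ⊆ A ∧ Disjoint T A ∧ x = cutCap c A}.Nonempty :=
    ⟨cutCap c Tᶜ, Tᶜ, fun v hv => Finset.mem_compl.2 (fun hvT => (Finset.disjoint_left.1 hd) hv hvT),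
      Finset.disjoint_left.2 fun v hv hv2 => (Finset.mem_compl.1 hv2) hv, rfl⟩
  exact hne.csInf_mem (minCut_set_finite c S T)

lemma le_minCut (c : V → V → ℝ) {S T : Finset V} {y : ℝ} (hd : Disjoint S T)
    (h : ∀ A : Finset V, S ⊆ A → Disjoint T A → y ≤ cutCap c A) :
    y ≤ minCut c S T := by
  apply le_csInf
  · exact ⟨cutCap c Tᶜ, Tᶜ, fun v hv => Finset.mem_compl.2 (fun hvT => (Finset.disjoint_left.1 hd) hv hvT),
      Finset.disjoint_left.2 fun v hv hv2 => (Finset.mem_compl.1 hv2) hv, rfl⟩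
  rintro x ⟨A, hS, hT, rfl⟩; exact h A hS hT

lemma cutCap_submodular (c : V → V → ℝ) (hc : ∀ u v, 0 ≤ c u v) (A B : Finset V) :
    cutCap c (A ∩ B) + cutCap c (A ∪ B) ≤ cutCap c A + cutCap c B := by
  simp only [cutCap_eq_sum_ite, ← Finset.sum_add_distrib]
  apply Finset.sum_le_sum; intro u _
  apply Finset.sum_le_sum; intro v _
  by_cases hua : u ∈ A <;> by_cases hub : u ∈ B <;> by_cases hva : v ∈ A <;> by_cases hvb : v ∈ B <;>
    simp [Finset.mem_inter, Finset.mem_union, hua, hub, hva, hvb, hc u v]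

lemma sum_netOut_eq (f : V → V → ℝ) (A : Finset V) :
    ∑ u ∈ A, netOut f u = (∑ u ∈ A, ∑ v ∈ Aᶜ, f u v) - ∑ u ∈ A, ∑ v ∈ Aᶜ, f v u := by
  simp only [netOut, Finset.sum_sub_distrib]
  have e1 : ∀ u, (∑ w, f u w) = (∑ w ∈ A, f u w) + ∑ w ∈ Aᶜ, f u w := by
    intro u; rw [Finset.sum_add_sum_compl]
  have e2 : ∀ u, (∑ w, f w u) = (∑ w ∈ A, f w u) + ∑ w ∈ Aᶜ, f w u := by
    intro u; rw [Finset.sum_add_sum_compl]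
  simp only [e1, e2, Finset.sum_add_distrib]
  have e3 : (∑ u ∈ A, ∑ w ∈ A, f w u) = ∑ u ∈ A, ∑ w ∈ A, f u w := Finset.sum_comm
  linarith

lemma sum_netOut_univ (f : V → V → ℝ) : ∑ u, netOut f u = 0 := by
  simp only [netOut, Finset.sum_sub_distrib]
  rw [Finset.sum_comm]
  ring

lemma sum_netOut_le_cutCap (c f : V → V → ℝ) (hf : ∀ u v, 0 ≤ f u v ∧ f u v ≤ c u v)
    (A : Finset V) : ∑ u ∈ A, netOut f u ≤ cutCap c A := by
  rw [sum_netOut_eq]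
  have h1 : (∑ u ∈ A, ∑ v ∈ Aᶜ, f u v) ≤ cutCap c A :=
    Finset.sum_le_sum fun u _ => Finset.sum_le_sum fun v _ => (hf u v).2
  have h2 : 0 ≤ ∑ u ∈ A, ∑ v ∈ Aᶜ, f v u :=
    Finset.sum_nonneg fun u _ => Finset.sum_nonneg fun v _ => (hf v u).1
  linarith

lemma netOut_addEdge (f : V → V → ℝ) (u v : V) (δ : ℝ) (w : V) :
    netOut (fun a b => f a b + if a = u ∧ b = v then δ else 0) w
      = netOut f w + (if w = u then δ else 0) - (if w = v then δ else 0) := by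
  simp only [netOut, Finset.sum_add_distrib]
  have h1 : (∑ b, if w = u ∧ b = v then δ else 0) = if w = u then δ else 0 := by
    by_cases h : w = u <;> simp [h]
  have h2 : (∑ a, if a = u ∧ w = v then δ else 0) = if w = v then δ else 0 := by
    by_cases h : w = v <;> simp [h]
  rw [h1, h2]; ring

lemma augment {c f : V → V → ℝ} (hf : ∀ u v, 0 ≤ f u v ∧ f u v ≤ c u v) (s : V) :
    ∀ v, Relation.ReflTransGen (fun a b => f a b < c a b ∨ 0 < f b a) s v →
    ∃ ε > 0, ∃ C > 0, ∀ δ : ℝ, 0 < δ → δ ≤ ε →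
      ∃ f', (∀ u v, 0 ≤ f' u v ∧ f' u v ≤ c u v) ∧
        (∀ a b, |f' a b - f a b| ≤ C * δ) ∧
        (∀ w, netOut f' w = netOut f w + (if w = s then δ else 0) - (if w = v then δ else 0)) := by
  intro v hv
  induction hv with
  | refl =>
    refine ⟨1, one_pos, 1, one_pos, fun δ hδ _ =>
      ⟨f, hf, fun a b => by simp; linarith, fun w => by ring⟩⟩
  | @tail b v hsb hr ih =>
    obtain ⟨ε, hε, C, hC, H⟩ := ih
    have hxp : ∀ δ : ℝ, (C + 1) * δ = C * δ + δ := fun δ => by ring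
    rcases hr with hlt | hgt
    · -- push forward on edge (b, v)
      have hρ : 0 < c b v - f b v := by linarith
      refine ⟨min ε ((c b v - f b v) / (C + 1)), lt_min hε (by positivity), C + 1, by positivity, ?_⟩
      intro δ hδ hδle
      obtain ⟨f1, hf1, hb1, hn1⟩ := H δ hδ (le_trans hδle (min_le_left _ _))
      have hδρ : (C + 1) * δ ≤ c b v - f b v := by
        have h := le_trans hδle (min_le_right _ _)
        rw [le_div_iff₀ (by positivity)] at h; linarith
      have hkey : f1 b v + δ ≤ c b v := by
        have h3 := abs_le.1 (hb1 b v)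
        rw [hxp δ] at hδρ; linarith [h3.2]
      refine ⟨fun a b' => f1 a b' + if a = b ∧ b' = v then δ else 0, ?_, ?_, ?_⟩
      · intro a b'
        by_cases h : a = b ∧ b' = v
        · simp only [if_pos h]
          rw [h.1, h.2]
          exact ⟨by linarith [(hf1 b v).1], hkey⟩
        · simp only [if_neg h, add_zero]; exact hf1 a b'
      · intro a b'
        have h3 := abs_le.1 (hb1 a b')
        rw [hxp δ]
        by_cases h : a = b ∧ b' = v
        · simp only [if_pos h]
          rw [abs_le]; constructor <;> linarith [h3.1, h3.2]
        · simp only [if_neg h, add_zero]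
          rw [abs_le]; constructor <;> linarith [h3.1, h3.2]
      · intro w
        rw [netOut_addEdge, hn1 w]; ring
    · -- push backward on edge (v, b)
      have hρ : 0 < f v b := hgt
      refine ⟨min ε (f v b / (C + 1)), lt_min hε (by positivity), C + 1, by positivity, ?_⟩
      intro δ hδ hδle
      obtain ⟨f1, hf1, hb1, hn1⟩ := H δ hδ (le_trans hδle (min_le_left _ _))
      have hδρ : (C + 1) * δ ≤ f v b := by
        have h := le_trans hδle (min_le_right _ _)
        rw [le_div_iff₀ (by positivity)] at h; linarith
      have hkey : δ ≤ f1 v b := by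
        have h3 := abs_le.1 (hb1 v b)
        rw [hxp δ] at hδρ; linarith [h3.1]
      refine ⟨fun a b' => f1 a b' + if a = v ∧ b' = b then -δ else 0, ?_, ?_, ?_⟩
      · intro a b'
        by_cases h : a = v ∧ b' = b
        · simp only [if_pos h]
          rw [h.1, h.2]
          exact ⟨by linarith, by linarith [(hf1 v b).2]⟩
        · simp only [if_neg h, add_zero]; exact hf1 a b'
      · intro a b'
        have h3 := abs_le.1 (hb1 a b')
        rw [hxp δ]
        by_cases h : a = v ∧ b' = b
        · simp only [if_pos h]
          rw [abs_le]; constructor <;> linarith [h3.1, h3.2]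
        · simp only [if_neg h, add_zero]
          rw [abs_le]; constructor <;> linarith [h3.1, h3.2]
      · intro w
        rw [netOut_addEdge, hn1 w]
        have nv : (if w = v then -δ else 0) = -(if w = v then δ else 0) := by split <;> ring
        have nb : (if w = b then -δ else 0) = -(if w = b then δ else 0) := by split <;> ring
        rw [nv, nb]; ring

lemma exists_max_flow (c : V → V → ℝ) (hc : ∀ u v, 0 ≤ c u v) (s t : V) :
    ∃ f, ((∀ u v, 0 ≤ f u v ∧ f u v ≤ c u v) ∧ (∀ w, w ≠ s → w ≠ t → netOut f w = 0)) ∧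
      ∀ g, ((∀ u v, 0 ≤ g u v ∧ g u v ≤ c u v) ∧ (∀ w, w ≠ s → w ≠ t → netOut g w = 0)) →
        netOut g s ≤ netOut f s := by
  classical
  set K : Set (V → V → ℝ) :=
    {f | (∀ u v, 0 ≤ f u v ∧ f u v ≤ c u v) ∧ (∀ w, w ≠ s → w ≠ t → netOut f w = 0)} with hK
  have hcont : ∀ u v : V, Continuous fun f : V → V → ℝ => f u v :=
    fun u v => (continuous_apply v).comp (continuous_apply u)
  have hnet : ∀ w : V, Continuous fun f : V → V → ℝ => netOut f w := fun w => by
    apply Continuous.sub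
    · exact continuous_finset_sum _ fun i _ => hcont w i
    · exact continuous_finset_sum _ fun i _ => hcont i w
  have hclosed : IsClosed K := by
    have : K = (⋂ u, ⋂ v, {f : V → V → ℝ | 0 ≤ f u v} ∩ {f | f u v ≤ c u v}) ∩
        (⋂ w ∈ {w : V | w ≠ s ∧ w ≠ t}, {f | netOut f w = 0}) := by
      ext f
      simp only [hK, Set.mem_setOf_eq, Set.mem_inter_iff, Set.mem_iInter, Set.mem_setOf_eq]
      constructor
      · rintro ⟨h1, h2⟩
        exact ⟨fun u v => ⟨(h1 u v).1, (h1 u v).2⟩, fun w hw => h2 w hw.1 hw.2⟩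
      · rintro ⟨h1, h2⟩
        exact ⟨fun u v => ⟨(h1 u v).1, (h1 u v).2⟩, fun w hw1 hw2 => h2 w ⟨hw1, hw2⟩⟩
    rw [this]
    apply IsClosed.inter
    · exact isClosed_iInter fun u => isClosed_iInter fun v =>
        (IsClosed.inter (isClosed_le continuous_const (hcont u v))
          (isClosed_le (hcont u v) continuous_const))
    · exact isClosed_biInter fun w _ => isClosed_eq (hnet w) continuous_const
  have hbdd : K ⊆ Metric.closedBall 0 ‖c‖ := by
    intro f hf
    rw [Metric.mem_closedBall, dist_zero_right]
    rw [pi_norm_le_iff_of_nonneg (norm_nonneg c)]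
    intro u
    rw [pi_norm_le_iff_of_nonneg (norm_nonneg c)]
    intro v
    have h1 := (hf.1 u v).1
    have h2 := (hf.1 u v).2
    have h3 : c u v ≤ ‖c‖ := by
      calc c u v ≤ ‖c u v‖ := le_abs_self _
        _ ≤ ‖c u‖ := norm_le_pi_norm (c u) v
        _ ≤ ‖c‖ := norm_le_pi_norm c u
    rw [Real.norm_eq_abs, abs_le]
    constructor <;> [linarith [norm_nonneg c]; linarith]
  have hcmp : IsCompact K :=
    (isCompact_closedBall 0 ‖c‖).of_isClosed_subset hclosed hbdd
  have hne : K.Nonempty := by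
    refine ⟨fun _ _ => 0, fun u v => ⟨le_refl _, hc u v⟩, fun w _ _ => by simp [netOut]⟩
  obtain ⟨f, hfK, hmax⟩ := hcmp.exists_isMaxOn hne ((hnet s).continuousOn)
  exact ⟨f, hfK, fun g hg => hmax hg⟩

theorem maxflow_mincut (c : V → V → ℝ) (hc : ∀ u v, 0 ≤ c u v) (s t : V) (hst : s ≠ t) :
    ∃ f, (∀ u v, 0 ≤ f u v ∧ f u v ≤ c u v) ∧ (∀ w, w ≠ s → w ≠ t → netOut f w = 0) ∧
      netOut f s = minCut c {s} {t} := by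
  classical
  obtain ⟨f, ⟨hfeas, hcons⟩, hmax⟩ := exists_max_flow c hc s t
  set r : V → V → Prop := fun a b => f a b < c a b ∨ 0 < f b a with hr
  set A : Finset V := Finset.univ.filter (fun v => Relation.ReflTransGen r s v) with hA
  have hmemA : ∀ v, v ∈ A ↔ Relation.ReflTransGen r s v := by intro v; simp [hA]
  have hsA : s ∈ A := (hmemA s).2 Relation.ReflTransGen.refl
  have htA : t ∉ A := by
    intro ht
    obtain ⟨ε, hε, C, hC, H⟩ := augment hfeas s t ((hmemA t).1 ht)
    obtain ⟨f', hf', _, hn'⟩ := H (min ε 1) (lt_min hε one_pos) (min_le_left _ _)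
    have hcons' : ∀ w, w ≠ s → w ≠ t → netOut f' w = 0 := by
      intro w hw1 hw2
      rw [hn' w, if_neg hw1, if_neg hw2, hcons w hw1 hw2]; ring
    have hle := hmax f' ⟨hf', hcons'⟩
    rw [hn' s, if_pos rfl, if_neg hst] at hle
    have : 0 < min ε 1 := lt_min hε one_pos
    linarith
  have hcut : ∀ u ∈ A, ∀ v, v ∉ A → f u v = c u v ∧ f v u = 0 := by
    intro u hu v hv
    have hnr : ¬ r u v := fun hruv => hv ((hmemA v).2 (((hmemA u).1 hu).tail hruv))
    simp only [hr, not_or, not_lt] at hnr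
    exact ⟨le_antisymm (hfeas u v).2 hnr.1, le_antisymm hnr.2 (hfeas v u).1⟩
  have hval : netOut f s = cutCap c A := by
    have h1 : ∑ u ∈ A, netOut f u = netOut f s := by
      apply Finset.sum_eq_single_of_mem s hsA
      intro u hu hus
      exact hcons u hus (fun h => htA (h ▸ hu))
    rw [← h1, sum_netOut_eq]
    have h2 : (∑ u ∈ A, ∑ v ∈ Aᶜ, f u v) = cutCap c A := by
      apply Finset.sum_congr rfl; intro u hu
      apply Finset.sum_congr rfl; intro v hv
      exact (hcut u hu v (Finset.mem_compl.1 hv)).1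
    have h3 : (∑ u ∈ A, ∑ v ∈ Aᶜ, f v u) = 0 := by
      apply Finset.sum_eq_zero; intro u hu; apply Finset.sum_eq_zero; intro v hv
      exact (hcut u hu v (Finset.mem_compl.1 hv)).2
    rw [h2, h3, sub_zero]
  refine ⟨f, hfeas, hcons, le_antisymm ?_ ?_⟩
  · apply le_minCut c (Finset.disjoint_singleton.2 hst)
    intro A' hS hT
    have hsA' : s ∈ A' := hS (Finset.mem_singleton_self s)
    have htA' : t ∉ A' := fun h => Finset.disjoint_left.1 hT (Finset.mem_singleton_self t) h
    have h1 : ∑ u ∈ A', netOut f u = netOut f s := by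
      apply Finset.sum_eq_single_of_mem s hsA'
      intro u hu hus
      exact hcons u hus (fun h => htA' (h ▸ hu))
    rw [← h1]
    exact sum_netOut_le_cutCap c f hfeas A'
  · rw [hval]
    exact minCut_le c (Finset.singleton_subset_iff.2 hsA) (Finset.disjoint_singleton_left.2 htA)


lemma cutCap_transpose (c : V → V → ℝ) (A : Finset V) :
    cutCap (fun u v => c v u) A = cutCap c Aᶜ := by
  unfold cutCap
  rw [Finset.sum_comm, compl_compl]

lemma minCut_transpose (c : V → V → ℝ) (S T : Finset V) :
    minCut (fun u v => c v u) S T = minCut c T S := by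
  unfold minCut
  congr 1
  ext x
  constructor
  · rintro ⟨A, hS, hT, rfl⟩
    refine ⟨Aᶜ, fun v hv => Finset.mem_compl.2 (Finset.disjoint_left.1 hT hv),
      Finset.disjoint_left.2 (fun v hv hv2 => (Finset.mem_compl.1 hv2) (hS hv)), ?_⟩
    exact cutCap_transpose c A
  · rintro ⟨B, hT, hS, rfl⟩
    refine ⟨Bᶜ, fun v hv => Finset.mem_compl.2 (Finset.disjoint_left.1 hS hv),
      Finset.disjoint_left.2 (fun v hv hv2 => (Finset.mem_compl.1 hv2) (hT hv)), ?_⟩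
    rw [cutCap_transpose c Bᶜ, compl_compl]

lemma netOut_flip (f : V → V → ℝ) (v : V) :
    netOut (fun a b => f b a) v = -netOut f v := by
  simp [netOut]

lemma sum_netOut_extflow {k : ℕ} {c f : V → V → ℝ} {t : Fin k → V} {x : Fin k → ℝ}
    (ht : Function.Injective t) (hf : IsExtFlow c f t x) (A : Finset V) (S : Finset (Fin k))
    (hmem : ∀ i, t i ∈ A ↔ i ∈ S) :
    ∑ u ∈ A, netOut f u = ∑ i ∈ S, x i := by
  rw [← Finset.sum_inter_add_sum_sdiff A (Finset.univ.image t) (netOut f)]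
  have h2 : ∑ u ∈ A \ Finset.univ.image t, netOut f u = 0 := by
    apply Finset.sum_eq_zero
    intro u hu
    rw [Finset.mem_sdiff] at hu
    apply hf.2.1
    intro i hi
    exact hu.2 (Finset.mem_image.2 ⟨i, Finset.mem_univ i, hi⟩)
  have h1 : A ∩ Finset.univ.image t = S.image t := by
    ext u
    simp only [Finset.mem_inter, Finset.mem_image, Finset.mem_univ, true_and]
    constructor
    · rintro ⟨huA, i, rfl⟩
      exact ⟨i, (hmem i).1 huA, rfl⟩
    · rintro ⟨i, hiS, rfl⟩
      exact ⟨(hmem i).2 hiS, i, rfl⟩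
  rw [h1, h2, add_zero, Finset.sum_image (fun i _ j _ h => ht h)]
  exact Finset.sum_congr rfl fun i _ => hf.2.2 i

lemma extflow_sum_eq_zero {k : ℕ} {c f : V → V → ℝ} {t : Fin k → V} {x : Fin k → ℝ}
    (ht : Function.Injective t) (hf : IsExtFlow c f t x) : ∑ i, x i = 0 := by
  rw [← sum_netOut_extflow ht hf Finset.univ Finset.univ (fun i => by simp)]
  exact sum_netOut_univ f

lemma extflow_le_minCut {k : ℕ} {c f : V → V → ℝ} {t : Fin k → V} {x : Fin k → ℝ}
    (ht : Function.Injective t) (hf : IsExtFlow c f t x) (S : Finset (Fin k)) :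
    ∑ i ∈ S, x i ≤ minCut c (S.image t) (Sᶜ.image t) := by
  apply le_minCut c ((Finset.disjoint_image ht).2 (disjoint_compl_right))
  intro A hS hT
  have hmem : ∀ i, t i ∈ A ↔ i ∈ S := by
    intro i
    constructor
    · intro hi
      by_contra hiS
      exact Finset.disjoint_left.1 hT
        (Finset.mem_image.2 ⟨i, Finset.mem_compl.2 hiS, rfl⟩) hi
    · intro hi
      exact hS (Finset.mem_image.2 ⟨i, hi, rfl⟩)
  rw [← sum_netOut_extflow ht hf A S hmem]
  exact sum_netOut_le_cutCap c f hf.1 A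

lemma sum_ite_mem_eq (A₀ : Finset V) (a0 : V) (y : ℝ) :
    (∑ a, if a ∈ A₀ then (if a = a0 then y else 0) else 0) = if a0 ∈ A₀ then y else 0 := by
  have e : ∀ a, (if a ∈ A₀ then (if a = a0 then y else 0) else 0)
      = (if a = a0 then (if a0 ∈ A₀ then y else 0) else 0) := by
    intro a
    by_cases h1 : a = a0
    · subst h1; by_cases h2 : a ∈ A₀ <;> simp [h2]
    · simp [h1]
  rw [Finset.sum_congr rfl (fun a _ => e a)]
  simp [Finset.sum_ite_eq']

lemma galePos (c : V → V → ℝ) (hc : ∀ u v, 0 ≤ c u v) (t : Fin 3 → V) (ht : Function.Injective t)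
    (x : Fin 3 → ℝ) (i0 : Fin 3) (hneg : ∀ j, j ≠ i0 → x j ≤ 0) (hsum : ∑ i, x i = 0)
    (hG1 : x i0 ≤ minCut c {t i0} {t (i0+1), t (i0+2)})
    (hG2 : x i0 + x (i0+1) ≤ minCut c {t i0, t (i0+1)} {t (i0+2)})
    (hG3 : x i0 + x (i0+2) ≤ minCut c {t i0, t (i0+2)} {t (i0+1)}) :
    ∃ f, IsExtFlow c f t x := by
  classical
  have f3 : ∀ i : Fin 3, i ≠ i + 1 ∧ i ≠ i + 2 ∧ i + 1 ≠ i + 2 := by decide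
  have funiv : ∀ i : Fin 3, (Finset.univ : Finset (Fin 3)) = {i, i+1, i+2} := by decide
  have fall : ∀ i j : Fin 3, j = i ∨ j = i + 1 ∨ j = i + 2 := by decide
  set j0 := i0 + 1 with hj0
  set k0 := i0 + 2 with hk0
  have htij : t i0 ≠ t j0 := fun h => (f3 i0).1 (ht h)
  have htik : t i0 ≠ t k0 := fun h => (f3 i0).2.1 (ht h)
  have htjk : t j0 ≠ t k0 := fun h => (f3 i0).2.2 (ht h)
  have hsum3 : x i0 + (x j0 + x k0) = 0 := by
    rw [funiv i0] at hsum
    rwa [Finset.sum_insert (by simp [(f3 i0).1, (f3 i0).2.1]),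
      Finset.sum_insert (by simp [(f3 i0).2.2]), Finset.sum_singleton] at hsum
  have hxj0 : x j0 ≤ 0 := hneg j0 (fun h => (f3 i0).1 h.symm)
  have hxk0 : x k0 ≤ 0 := hneg k0 (fun h => (f3 i0).2.1 h.symm)
  have hxi0 : 0 ≤ x i0 := by linarith
  -- the auxiliary network on Option V with a super-sink `none`
  set c' : Option V → Option V → ℝ := fun u v =>
    match u, v with
    | some a, some b => c a b
    | some a, none => (if a = t j0 then -x j0 else 0) + (if a = t k0 then -x k0 else 0)
    | none, _ => 0
    with hc'def
  have hcnone : ∀ a : V, c' (some a) none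
      = (if a = t j0 then -x j0 else 0) + (if a = t k0 then -x k0 else 0) := fun a => rfl
  have hcsome : ∀ a b : V, c' (some a) (some b) = c a b := fun a b => rfl
  have hcz : ∀ v, c' none v = 0 := fun v => rfl
  have hc' : ∀ u v, 0 ≤ c' u v := by
    rintro (_ | a) (_ | b)
    · simp [hcz]
    · simp [hcz]
    · rw [hcnone]
      have h1 : (0:ℝ) ≤ if a = t j0 then -x j0 else 0 := by
        by_cases h : a = t j0 <;> simp [h] <;> linarith
      have h2 : (0:ℝ) ≤ if a = t k0 then -x k0 else 0 := by
        by_cases h : a = t k0 <;> simp [h] <;> linarith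
      linarith
    · rw [hcsome]; exact hc a b
  obtain ⟨g, hgf, hgc, hgv⟩ := maxflow_mincut c' hc' (some (t i0)) none (by simp)
  have hcapsum : ∑ a : V, c' (some a) none = -x j0 + -x k0 := by
    rw [Finset.sum_congr rfl (fun a _ => hcnone a), Finset.sum_add_distrib]
    rw [Finset.sum_ite_eq' Finset.univ (t j0) (fun _ => -x j0),
      Finset.sum_ite_eq' Finset.univ (t k0) (fun _ => -x k0)]
    simp
  have himg : ({none} : Finset (Option V))ᶜ = Finset.univ.image some := by
    ext u; cases u <;> simp
  have hupper : minCut c' {some (t i0)} {none} ≤ -x j0 + -x k0 := by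
    have hcap : cutCap c' ({none} : Finset (Option V))ᶜ = -x j0 + -x k0 := by
      unfold cutCap
      rw [compl_compl]
      rw [Finset.sum_congr rfl (fun u _ => Finset.sum_singleton (fun v => c' u v) none)]
      rw [himg, Finset.sum_image (fun a _ b _ h => Option.some_injective V h)]
      exact hcapsum
    rw [← hcap]
    exact minCut_le c' (Finset.singleton_subset_iff.2 (Finset.mem_compl.2 (by simp)))
      disjoint_compl_right
  have hlower : x i0 ≤ minCut c' {some (t i0)} {none} := by
    apply le_minCut c' (by simp)
    intro A hS hT
    have hsA : some (t i0) ∈ A := hS (Finset.mem_singleton_self _)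
    have hnA : none ∉ A := fun h => Finset.disjoint_left.1 hT (Finset.mem_singleton_self none) h
    set A₀ : Finset V := Finset.univ.filter (fun a => some a ∈ A) with hA₀
    have hmem₀ : ∀ a : V, a ∈ A₀ ↔ some a ∈ A := by intro a; simp [hA₀]
    have hti0 : t i0 ∈ A₀ := (hmem₀ _).2 hsA
    have hdec : cutCap c' A = cutCap c A₀
        + ((if t j0 ∈ A₀ then -x j0 else 0) + (if t k0 ∈ A₀ then -x k0 else 0)) := by
      rw [cutCap_eq_sum_ite c' A, Fintype.sum_option]
      have hnone : (∑ v : Option V, if none ∈ A ∧ v ∉ A then c' none v else 0) = 0 := by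
        apply Finset.sum_eq_zero; intro v _; simp [hnA]
      rw [hnone, zero_add]
      have hin : ∀ a : V, (∑ v : Option V, if some a ∈ A ∧ v ∉ A then c' (some a) v else 0)
          = (if a ∈ A₀ then c' (some a) none else 0)
            + ∑ b : V, if a ∈ A₀ ∧ b ∉ A₀ then c a b else 0 := by
        intro a
        rw [Fintype.sum_option]
        congr 1
        · by_cases h : some a ∈ A
          · rw [if_pos ⟨h, hnA⟩, if_pos ((hmem₀ a).2 h)]
          · rw [if_neg (fun hh => h hh.1), if_neg (fun hh => h ((hmem₀ a).1 hh))]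
        · apply Finset.sum_congr rfl; intro b _
          have hiff : (some a ∈ A ∧ some b ∉ A) ↔ (a ∈ A₀ ∧ b ∉ A₀) := by
            simp [hmem₀]
          by_cases h : a ∈ A₀ ∧ b ∉ A₀
          · rw [if_pos (hiff.2 h), if_pos h]
          · rw [if_neg (fun hh => h (hiff.1 hh)), if_neg h]
      rw [Finset.sum_congr rfl (fun a _ => hin a), Finset.sum_add_distrib]
      have h1 : (∑ a : V, if a ∈ A₀ then c' (some a) none else 0)
          = (if t j0 ∈ A₀ then -x j0 else 0) + (if t k0 ∈ A₀ then -x k0 else 0) := by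
        have e : ∀ a : V, (if a ∈ A₀ then c' (some a) none else 0)
            = (if a ∈ A₀ then (if a = t j0 then -x j0 else 0) else 0)
              + (if a ∈ A₀ then (if a = t k0 then -x k0 else 0) else 0) := by
          intro a; by_cases h : a ∈ A₀ <;> simp [h, hcnone]
        rw [Finset.sum_congr rfl (fun a _ => e a), Finset.sum_add_distrib,
          _root_.sum_ite_mem_eq, _root_.sum_ite_mem_eq]
      rw [h1, ← cutCap_eq_sum_ite c A₀]
      ring
    rw [hdec]
    by_cases hj : t j0 ∈ A₀ <;> by_cases hk : t k0 ∈ A₀ <;>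
      simp only [hj, hk, if_true, if_false]
    · -- both in: cutCap ≥ 0
      have h0 := cutCap_nonneg c hc A₀
      linarith
    · -- j0 in, k0 out : use hG2
      have hle : minCut c {t i0, t j0} {t k0} ≤ cutCap c A₀ := by
        apply minCut_le
        · intro v hv
          simp only [Finset.mem_insert, Finset.mem_singleton] at hv
          rcases hv with rfl | rfl
          · exact hti0
          · exact hj
        · rw [Finset.disjoint_left]
          intro v hv hvA
          rw [Finset.mem_singleton] at hv
          subst hv; exact hk hvA
      linarith
    · -- k0 in, j0 out : use hG3
      have hle : minCut c {t i0, t k0} {t j0} ≤ cutCap c A₀ := by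
        apply minCut_le
        · intro v hv
          simp only [Finset.mem_insert, Finset.mem_singleton] at hv
          rcases hv with rfl | rfl
          · exact hti0
          · exact hk
        · rw [Finset.disjoint_left]
          intro v hv hvA
          rw [Finset.mem_singleton] at hv
          subst hv; exact hj hvA
      linarith
    · -- both out : use hG1
      have hle : minCut c {t i0} {t j0, t k0} ≤ cutCap c A₀ := by
        apply minCut_le
        · exact Finset.singleton_subset_iff.2 hti0
        · rw [Finset.disjoint_left]
          intro v hv hvA
          simp only [Finset.mem_insert, Finset.mem_singleton] at hv
          rcases hv with rfl | rfl
          · exact hj hvA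
          · exact hk hvA
      linarith
  have hval : netOut g (some (t i0)) = x i0 := by
    rw [hgv]
    have : -x j0 + -x k0 = x i0 := by linarith
    rw [← this] at hlower ⊢
    exact le_antisymm hupper hlower
  -- g vanishes out of `none`
  have hgz : ∀ w, g none w = 0 :=
    fun w => le_antisymm (by rw [← hcz w]; exact (hgf none w).2) (hgf none w).1
  -- restricted flow
  set f : V → V → ℝ := fun a b => g (some a) (some b) with hfdef
  have hnetf : ∀ a : V, netOut f a = netOut g (some a) - g (some a) none := by
    intro a
    unfold netOut
    rw [Fintype.sum_option (f := fun w => g (some a) w),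
      Fintype.sum_option (f := fun w => g w (some a))]
    rw [hgz (some a)]
    ring
  -- saturation of the sink edges
  have hsat : ∀ a : V, g (some a) none = c' (some a) none := by
    have hsum0 : ∑ w : Option V, netOut g w = 0 := sum_netOut_univ g
    have hsplit : ∑ w : Option V, netOut g w
        = netOut g (some (t i0)) + netOut g none := by
      rw [← Finset.sum_add_sum_compl ({some (t i0), none} : Finset (Option V))]
      have h2 : ∑ w ∈ ({some (t i0), none} : Finset (Option V))ᶜ, netOut g w = 0 := by
        apply Finset.sum_eq_zero
        intro w hw
        rw [Finset.mem_compl, Finset.mem_insert, Finset.mem_singleton] at hw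
        push_neg at hw
        exact hgc w hw.1 hw.2
      rw [h2, add_zero, Finset.sum_insert (by simp), Finset.sum_singleton]
    have hnone : netOut g none = - ∑ a : V, g (some a) none := by
      unfold netOut
      rw [Fintype.sum_option (f := fun w => g none w),
        Fintype.sum_option (f := fun w => g w none)]
      simp [hgz]
    have htot : ∑ a : V, g (some a) none = x i0 := by
      rw [hsplit, hval, hnone] at hsum0
      linarith
    have hdiff : ∑ a : V, (c' (some a) none - g (some a) none) = 0 := by
      rw [Finset.sum_sub_distrib, hcapsum, htot]
      linarith
    intro a
    have := (Finset.sum_eq_zero_iff_of_nonneg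
      (fun b _ => sub_nonneg.2 (hgf (some b) none).2)).1 hdiff a (Finset.mem_univ a)
    linarith [this]
  refine ⟨f, ⟨?_, ?_, ?_⟩⟩
  · intro u v
    exact ⟨(hgf (some u) (some v)).1, by rw [← hcsome u v]; exact (hgf (some u) (some v)).2⟩
  · intro v hv
    rw [hnetf v, hgc (some v) (fun h => hv i0 (Option.some_injective V h).symm) (by simp),
      hsat v, hcnone v, if_neg (fun h => hv j0 h.symm), if_neg (fun h => hv k0 h.symm)]
    ring
  · intro i
    rcases fall i0 i with rfl | rfl | rfl
    · rw [hnetf, hval, hsat, hcnone, if_neg htij, if_neg htik]; ring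
    · rw [hnetf, hgc (some (t j0)) (by simpa using (fun h => htij (Eq.symm h))) (by simp),
        hsat, hcnone, if_pos rfl, if_neg htjk]
      ring
    · rw [hnetf, hgc (some (t k0)) (by simpa using (fun h => htik (Eq.symm h))) (by simp),
        hsat, hcnone, if_neg (fun h => htjk h.symm), if_pos rfl]
      ring

lemma galePos' (c : V → V → ℝ) (hc : ∀ u v, 0 ≤ c u v) (t : Fin 3 → V) (ht : Function.Injective t)
    (x : Fin 3 → ℝ) (i0 : Fin 3) (hneg : ∀ j, j ≠ i0 → x j ≤ 0) (hsum : ∑ i, x i = 0)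
    (hGale : ∀ S : Finset (Fin 3), S.Nonempty → S ≠ Finset.univ →
      ∑ i ∈ S, x i ≤ minCut c (S.image t) (Sᶜ.image t)) :
    ∃ f, IsExtFlow c f t x := by
  have f3 : ∀ i : Fin 3, i ≠ i + 1 ∧ i ≠ i + 2 ∧ i + 1 ≠ i + 2 := by decide
  have fc1 : ∀ i : Fin 3, ({i} : Finset (Fin 3))ᶜ = {i+1, i+2} := by decide
  have fc2 : ∀ i : Fin 3, ({i, i+1} : Finset (Fin 3))ᶜ = {i+2} := by decide
  have fc3 : ∀ i : Fin 3, ({i, i+2} : Finset (Fin 3))ᶜ = {i+1} := by decide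
  have fne1 : ∀ i : Fin 3, ({i} : Finset (Fin 3)) ≠ Finset.univ := by decide
  have fne2 : ∀ i : Fin 3, ({i, i+1} : Finset (Fin 3)) ≠ Finset.univ := by decide
  have fne3 : ∀ i : Fin 3, ({i, i+2} : Finset (Fin 3)) ≠ Finset.univ := by decide
  have hG1 : x i0 ≤ minCut c {t i0} {t (i0+1), t (i0+2)} := by
    have h := hGale {i0} ⟨i0, Finset.mem_singleton_self i0⟩ (fne1 i0)
    rwa [fc1 i0, Finset.sum_singleton, Finset.image_singleton, Finset.image_insert,
      Finset.image_singleton] at h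
  have hG2 : x i0 + x (i0+1) ≤ minCut c {t i0, t (i0+1)} {t (i0+2)} := by
    have h := hGale {i0, i0+1} ⟨i0, by simp⟩ (fne2 i0)
    rwa [fc2 i0, Finset.sum_insert (by simp [(f3 i0).1]), Finset.sum_singleton,
      Finset.image_insert, Finset.image_singleton, Finset.image_singleton] at h
  have hG3 : x i0 + x (i0+2) ≤ minCut c {t i0, t (i0+2)} {t (i0+1)} := by
    have h := hGale {i0, i0+2} ⟨i0, by simp⟩ (fne3 i0)
    rwa [fc3 i0, Finset.sum_insert (by simp [(f3 i0).2.1]), Finset.sum_singleton,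
      Finset.image_insert, Finset.image_singleton, Finset.image_singleton] at h
  exact galePos c hc t ht x i0 hneg hsum hG1 hG2 hG3

lemma gale (c : V → V → ℝ) (hc : ∀ u v, 0 ≤ c u v) (t : Fin 3 → V) (ht : Function.Injective t)
    (x : Fin 3 → ℝ) (hsum : ∑ i, x i = 0)
    (hGale : ∀ S : Finset (Fin 3), S.Nonempty → S ≠ Finset.univ →
      ∑ i ∈ S, x i ≤ minCut c (S.image t) (Sᶜ.image t)) :
    ∃ f, IsExtFlow c f t x := by
  classical
  by_cases h : ∃ i0 : Fin 3, ∀ j, j ≠ i0 → x j ≤ 0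
  · obtain ⟨i0, hi0⟩ := h
    exact galePos' c hc t ht x i0 hi0 hsum hGale
  · push_neg at h
    obtain ⟨a, ha0, hxa⟩ := h 0
    obtain ⟨b, hba, hxb⟩ := h a
    have hfind : ∀ a b : Fin 3, b ≠ a → ∃ i0 : Fin 3, ∀ j, j ≠ i0 → j = a ∨ j = b := by decide
    obtain ⟨i0, hi0⟩ := hfind a b hba
    have hpos : ∀ j, j ≠ i0 → 0 ≤ x j := by
      intro j hj
      rcases hi0 j hj with rfl | rfl
      · exact le_of_lt hxa
      · exact le_of_lt hxb
    have hsum2 : ∑ i, -x i = 0 := by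
      have h3 : ∑ i, -x i = -∑ i, x i := by simp
      rw [h3, hsum, neg_zero]
    have hGale2 : ∀ S : Finset (Fin 3), S.Nonempty → S ≠ Finset.univ →
        ∑ i ∈ S, -x i ≤ minCut (fun u v => c v u) (S.image t) (Sᶜ.image t) := by
      intro S hne hnu
      rw [minCut_transpose]
      have h2 := Finset.sum_add_sum_compl S x
      rw [hsum] at h2
      have h1 : ∑ i ∈ S, -x i = ∑ i ∈ Sᶜ, x i := by
        have h3 : ∑ i ∈ S, -x i = -∑ i ∈ S, x i := by simp
        linarith
      rw [h1]
      have hSc_ne : Sᶜ.Nonempty := by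
        rw [Finset.nonempty_iff_ne_empty]
        intro hce
        exact hnu ((Finset.compl_eq_empty_iff S).1 hce)
      have hSc_nu : Sᶜ ≠ Finset.univ := by
        intro hcu
        rw [Finset.compl_eq_univ_iff] at hcu
        exact hne.ne_empty hcu
      have h3 := hGale Sᶜ hSc_ne hSc_nu
      rwa [compl_compl] at h3
    obtain ⟨f2, hf2⟩ := galePos' (fun u v => c v u) (fun u v => hc v u) t ht
      (fun i => -x i) i0 (fun j hj => neg_nonpos.2 (hpos j hj)) hsum2 hGale2
    refine ⟨fun u v => f2 v u, ⟨?_, ?_, ?_⟩⟩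
    · intro u v
      exact ⟨(hf2.1 v u).1, (hf2.1 v u).2⟩
    · intro v hv
      rw [netOut_flip, hf2.2.1 v hv, neg_zero]
    · intro i
      rw [netOut_flip, hf2.2.2 i, neg_neg]


lemma key1 (c : V → V → ℝ) (hc : ∀ u v, 0 ≤ c u v) (a b d : V)
    (hab : a ≠ b) (had : a ≠ d) (hbd : b ≠ d) :
    minCut c {a} {b, d} ≤ minCut c {a, d} {b} + minCut c {a, b} {d} := by
  obtain ⟨A1, hS1, hT1, hE1⟩ := minCut_exists c (S := {a, d}) (T := {b})
    (Finset.disjoint_singleton_right.2 (by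
      simp only [Finset.mem_insert, Finset.mem_singleton]
      exact not_or.2 ⟨fun h => hab h.symm, fun h => hbd h⟩))
  obtain ⟨A2, hS2, hT2, hE2⟩ := minCut_exists c (S := {a, b}) (T := {d})
    (Finset.disjoint_singleton_right.2 (by
      simp only [Finset.mem_insert, Finset.mem_singleton]
      exact not_or.2 ⟨fun h => had h.symm, fun h => hbd h.symm⟩))
  have h1 : minCut c {a} {b, d} ≤ cutCap c (A1 ∩ A2) := by
    apply minCut_le
    · exact Finset.singleton_subset_iff.2 (Finset.mem_inter.2
        ⟨hS1 (Finset.mem_insert_self a _), hS2 (Finset.mem_insert_self a _)⟩)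
    · rw [Finset.disjoint_left]
      intro v hv hvA
      rw [Finset.mem_inter] at hvA
      simp only [Finset.mem_insert, Finset.mem_singleton] at hv
      rcases hv with rfl | rfl
      · exact Finset.disjoint_left.1 hT1 (Finset.mem_singleton_self v) hvA.1
      · exact Finset.disjoint_left.1 hT2 (Finset.mem_singleton_self v) hvA.2
  have h2 := cutCap_submodular c hc A1 A2
  have h3 := cutCap_nonneg c hc (A1 ∪ A2)
  rw [hE1, hE2]
  linarith

lemma key2 (c : V → V → ℝ) (hc : ∀ u v, 0 ≤ c u v) (a b d : V)
    (hab : a ≠ b) (had : a ≠ d) (hbd : b ≠ d) :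
    minCut c {a, b} {d} ≤ minCut c {a} {b, d} + minCut c {b} {a, d} := by
  obtain ⟨A1, hS1, hT1, hE1⟩ := minCut_exists c (S := {a}) (T := {b, d})
    (Finset.disjoint_left.2 (by
      intro v hv
      rw [Finset.mem_singleton] at hv
      subst hv
      simp only [Finset.mem_insert, Finset.mem_singleton]
      exact not_or.2 ⟨hab, had⟩))
  obtain ⟨A2, hS2, hT2, hE2⟩ := minCut_exists c (S := {b}) (T := {a, d})
    (Finset.disjoint_left.2 (by
      intro v hv
      rw [Finset.mem_singleton] at hv
      subst hv
      simp only [Finset.mem_insert, Finset.mem_singleton]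
      exact not_or.2 ⟨fun h => hab h.symm, hbd⟩))
  have h1 : minCut c {a, b} {d} ≤ cutCap c (A1 ∪ A2) := by
    apply minCut_le
    · intro v hv
      simp only [Finset.mem_insert, Finset.mem_singleton] at hv
      rw [Finset.mem_union]
      rcases hv with rfl | rfl
      · exact Or.inl (hS1 (Finset.mem_singleton_self v))
      · exact Or.inr (hS2 (Finset.mem_singleton_self v))
    · rw [Finset.disjoint_left]
      intro v hv hvA
      rw [Finset.mem_singleton] at hv
      subst hv
      rw [Finset.mem_union] at hvA
      rcases hvA with h | h
      · exact Finset.disjoint_left.1 hT1 (by simp) h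
      · exact Finset.disjoint_left.1 hT2 (by simp) h
  have h2 := cutCap_submodular c hc A1 A2
  have h3 := cutCap_nonneg c hc (A1 ∩ A2)
  rw [hE1, hE2]
  linarith

lemma rest_eq {t : Fin 3 → V} (ht : Function.Injective t) (i j k : Fin 3)
    (huniv : ({i, j, k} : Finset (Fin 3)) = Finset.univ) (hji : j ≠ i) (hki : k ≠ i) :
    (Finset.univ.image t) \ {t i} = {t j, t k} := by
  rw [← huniv, Finset.image_insert, Finset.image_insert, Finset.image_singleton]
  ext v
  simp only [Finset.mem_sdiff, Finset.mem_insert, Finset.mem_singleton]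
  constructor
  · rintro ⟨h1 | h1 | h1, h2⟩
    · exact absurd h1 h2
    · exact Or.inl h1
    · exact Or.inr h1
  · rintro (rfl | rfl)
    · exact ⟨Or.inr (Or.inl rfl), fun h => hji (ht h)⟩
    · exact ⟨Or.inr (Or.inr rfl), fun h => hki (ht h)⟩

lemma minCutH_pair (H : Fin 4 → Fin 4 → ℝ) (S' T' A1 A2 : Finset (Fin 4))
    (hA : ∀ A, S' ⊆ A → Disjoint T' A → (A = A1 ∨ A = A2))
    (h1 : S' ⊆ A1) (h1' : Disjoint T' A1) (h2 : S' ⊆ A2) (h2' : Disjoint T' A2) :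
    minCut H S' T' = min (cutCap H A1) (cutCap H A2) := by
  unfold minCut
  have hset : {x : ℝ | ∃ A, S' ⊆ A ∧ Disjoint T' A ∧ x = cutCap H A}
      = {cutCap H A1, cutCap H A2} := by
    ext y
    simp only [Set.mem_setOf_eq, Set.mem_insert_iff, Set.mem_singleton_iff]
    constructor
    · rintro ⟨A, hS, hT, rfl⟩
      rcases hA A hS hT with rfl | rfl
      · exact Or.inl rfl
      · exact Or.inr rfl
    · rintro (rfl | rfl)
      · exact ⟨A1, h1, h1', rfl⟩
      · exact ⟨A2, h2, h2', rfl⟩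
  rw [hset]; exact csInf_pair _ _

lemma part1 (c : V → V → ℝ) (hc : ∀ u v, 0 ≤ c u v) (t : Fin 3 → V) (ht : Function.Injective t) :
    ∀ S : Finset (Fin 3), S.Nonempty → S ≠ Finset.univ →
      minCut (starCap c t) (S.image Fin.castSucc) (Sᶜ.image Fin.castSucc) =
        minCut c (S.image t) (Sᶜ.image t) := by
  intro S hne hnu
  have hcase : ∀ S : Finset (Fin 3), S.Nonempty → S ≠ Finset.univ →
      (S = {0} ∨ S = {1} ∨ S = {2} ∨ S = {0,1} ∨ S = {0,2} ∨ S = {1,2}) := by decide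
  have hne01 : t 0 ≠ t 1 := fun h => (by decide : (0:Fin 3) ≠ 1) (ht h)
  have hne02 : t 0 ≠ t 2 := fun h => (by decide : (0:Fin 3) ≠ 2) (ht h)
  have hne12 : t 1 ≠ t 2 := fun h => (by decide : (1:Fin 3) ≠ 2) (ht h)
  have r0 : (Finset.univ.image t) \ {t 0} = {t 1, t 2} :=
    rest_eq ht 0 1 2 (by decide) (by decide) (by decide)
  have r1 : (Finset.univ.image t) \ {t 1} = {t 0, t 2} :=
    rest_eq ht 1 0 2 (by decide) (by decide) (by decide)
  have r2 : (Finset.univ.image t) \ {t 2} = {t 0, t 1} :=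
    rest_eq ht 2 0 1 (by decide) (by decide) (by decide)
  have hs03 : starCap c t 0 3 = minCut c {t 0} {t 1, t 2} := by
    rw [show starCap c t 0 3 = minCut c {t 0} ((Finset.univ.image t) \ {t 0}) from rfl, r0]
  have hs13 : starCap c t 1 3 = minCut c {t 1} {t 0, t 2} := by
    rw [show starCap c t 1 3 = minCut c {t 1} ((Finset.univ.image t) \ {t 1}) from rfl, r1]
  have hs23 : starCap c t 2 3 = minCut c {t 2} {t 0, t 1} := by
    rw [show starCap c t 2 3 = minCut c {t 2} ((Finset.univ.image t) \ {t 2}) from rfl, r2]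
  have hs30 : starCap c t 3 0 = minCut c {t 1, t 2} {t 0} := by
    rw [show starCap c t 3 0 = minCut c ((Finset.univ.image t) \ {t 0}) {t 0} from rfl, r0]
  have hs31 : starCap c t 3 1 = minCut c {t 0, t 2} {t 1} := by
    rw [show starCap c t 3 1 = minCut c ((Finset.univ.image t) \ {t 1}) {t 1} from rfl, r1]
  have hs32 : starCap c t 3 2 = minCut c {t 0, t 1} {t 2} := by
    rw [show starCap c t 3 2 = minCut c ((Finset.univ.image t) \ {t 2}) {t 2} from rfl, r2]
  have hz01 : starCap c t 0 1 = 0 := rfl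
  have hz02 : starCap c t 0 2 = 0 := rfl
  have hz10 : starCap c t 1 0 = 0 := rfl
  have hz12 : starCap c t 1 2 = 0 := rfl
  have hz20 : starCap c t 2 0 = 0 := rfl
  have hz21 : starCap c t 2 1 = 0 := rfl
  have k0 : minCut c {t 0} {t 1, t 2} ≤ minCut c {t 0, t 2} {t 1} + minCut c {t 0, t 1} {t 2} :=
    key1 c hc (t 0) (t 1) (t 2) hne01 hne02 hne12
  have k1 : minCut c {t 1} {t 0, t 2} ≤ minCut c {t 1, t 2} {t 0} + minCut c {t 0, t 1} {t 2} := by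
    have h := key1 c hc (t 1) (t 0) (t 2) (Ne.symm hne01) hne12 hne02
    rwa [Finset.pair_comm (t 1) (t 0)] at h
  have k2 : minCut c {t 2} {t 0, t 1} ≤ minCut c {t 1, t 2} {t 0} + minCut c {t 0, t 2} {t 1} := by
    have h := key1 c hc (t 2) (t 0) (t 1) (Ne.symm hne02) (Ne.symm hne12) hne01
    rwa [Finset.pair_comm (t 2) (t 1), Finset.pair_comm (t 2) (t 0)] at h
  have k0' : minCut c {t 0, t 1} {t 2} ≤ minCut c {t 0} {t 1, t 2} + minCut c {t 1} {t 0, t 2} :=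
    key2 c hc (t 0) (t 1) (t 2) hne01 hne02 hne12
  have k1' : minCut c {t 0, t 2} {t 1} ≤ minCut c {t 0} {t 1, t 2} + minCut c {t 2} {t 0, t 1} := by
    have h := key2 c hc (t 0) (t 2) (t 1) hne02 hne01 (Ne.symm hne12)
    rwa [Finset.pair_comm (t 2) (t 1)] at h
  have k2' : minCut c {t 1, t 2} {t 0} ≤ minCut c {t 1} {t 0, t 2} + minCut c {t 2} {t 0, t 1} := by
    have h := key2 c hc (t 1) (t 2) (t 0) hne12 (Ne.symm hne01) (Ne.symm hne02)
    rwa [Finset.pair_comm (t 2) (t 0), Finset.pair_comm (t 1) (t 0)] at h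
  rcases hcase S hne hnu with rfl | rfl | rfl | rfl | rfl | rfl
  · -- S = {0}
    rw [show ({0} : Finset (Fin 3)).image Fin.castSucc = ({0} : Finset (Fin 4)) from by decide,
      show (({0} : Finset (Fin 3))ᶜ).image Fin.castSucc = ({1,2} : Finset (Fin 4)) from by decide,
      show ({0} : Finset (Fin 3))ᶜ = ({1,2} : Finset (Fin 3)) from by decide,
      Finset.image_singleton, Finset.image_insert, Finset.image_singleton,
      minCutH_pair (starCap c t) {0} {1,2} {0} {0,3} (by decide) (by decide) (by decide)
        (by decide) (by decide)]
    have e1 : cutCap (starCap c t) ({0} : Finset (Fin 4)) = minCut c {t 0} {t 1, t 2} := by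
      rw [cutCap, show ({0} : Finset (Fin 4))ᶜ = ({1,2,3} : Finset (Fin 4)) from by decide,
        Finset.sum_singleton, Finset.sum_insert (by decide), Finset.sum_insert (by decide),
        Finset.sum_singleton, hz01, hz02, hs03]
      ring
    have e2 : cutCap (starCap c t) ({0,3} : Finset (Fin 4))
        = minCut c {t 0, t 2} {t 1} + minCut c {t 0, t 1} {t 2} := by
      rw [cutCap, show ({0,3} : Finset (Fin 4))ᶜ = ({1,2} : Finset (Fin 4)) from by decide,
        Finset.sum_insert (by decide), Finset.sum_singleton, Finset.sum_insert (by decide),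
        Finset.sum_singleton, Finset.sum_insert (by decide), Finset.sum_singleton,
        hz01, hz02, hs31, hs32]
      ring
    rw [e1, e2]
    exact min_eq_left k0
  · -- S = {1}
    rw [show ({1} : Finset (Fin 3)).image Fin.castSucc = ({1} : Finset (Fin 4)) from by decide,
      show (({1} : Finset (Fin 3))ᶜ).image Fin.castSucc = ({0,2} : Finset (Fin 4)) from by decide,
      show ({1} : Finset (Fin 3))ᶜ = ({0,2} : Finset (Fin 3)) from by decide,
      Finset.image_singleton, Finset.image_insert, Finset.image_singleton,
      minCutH_pair (starCap c t) {1} {0,2} {1} {1,3} (by decide) (by decide) (by decide)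
        (by decide) (by decide)]
    have e1 : cutCap (starCap c t) ({1} : Finset (Fin 4)) = minCut c {t 1} {t 0, t 2} := by
      rw [cutCap, show ({1} : Finset (Fin 4))ᶜ = ({0,2,3} : Finset (Fin 4)) from by decide,
        Finset.sum_singleton, Finset.sum_insert (by decide), Finset.sum_insert (by decide),
        Finset.sum_singleton, hz10, hz12, hs13]
      ring
    have e2 : cutCap (starCap c t) ({1,3} : Finset (Fin 4))
        = minCut c {t 1, t 2} {t 0} + minCut c {t 0, t 1} {t 2} := by
      rw [cutCap, show ({1,3} : Finset (Fin 4))ᶜ = ({0,2} : Finset (Fin 4)) from by decide,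
        Finset.sum_insert (by decide), Finset.sum_singleton, Finset.sum_insert (by decide),
        Finset.sum_singleton, Finset.sum_insert (by decide), Finset.sum_singleton,
        hz10, hz12, hs30, hs32]
      ring
    rw [e1, e2]
    exact min_eq_left k1
  · -- S = {2}
    rw [show ({2} : Finset (Fin 3)).image Fin.castSucc = ({2} : Finset (Fin 4)) from by decide,
      show (({2} : Finset (Fin 3))ᶜ).image Fin.castSucc = ({0,1} : Finset (Fin 4)) from by decide,
      show ({2} : Finset (Fin 3))ᶜ = ({0,1} : Finset (Fin 3)) from by decide,
      Finset.image_singleton, Finset.image_insert, Finset.image_singleton,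
      minCutH_pair (starCap c t) {2} {0,1} {2} {2,3} (by decide) (by decide) (by decide)
        (by decide) (by decide)]
    have e1 : cutCap (starCap c t) ({2} : Finset (Fin 4)) = minCut c {t 2} {t 0, t 1} := by
      rw [cutCap, show ({2} : Finset (Fin 4))ᶜ = ({0,1,3} : Finset (Fin 4)) from by decide,
        Finset.sum_singleton, Finset.sum_insert (by decide), Finset.sum_insert (by decide),
        Finset.sum_singleton, hz20, hz21, hs23]
      ring
    have e2 : cutCap (starCap c t) ({2,3} : Finset (Fin 4))
        = minCut c {t 1, t 2} {t 0} + minCut c {t 0, t 2} {t 1} := by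
      rw [cutCap, show ({2,3} : Finset (Fin 4))ᶜ = ({0,1} : Finset (Fin 4)) from by decide,
        Finset.sum_insert (by decide), Finset.sum_singleton, Finset.sum_insert (by decide),
        Finset.sum_singleton, Finset.sum_insert (by decide), Finset.sum_singleton,
        hz20, hz21, hs30, hs31]
      ring
    rw [e1, e2]
    exact min_eq_left k2
  · -- S = {0,1}
    rw [show ({0,1} : Finset (Fin 3)).image Fin.castSucc = ({0,1} : Finset (Fin 4)) from by decide,
      show (({0,1} : Finset (Fin 3))ᶜ).image Fin.castSucc = ({2} : Finset (Fin 4)) from by decide,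
      show ({0,1} : Finset (Fin 3))ᶜ = ({2} : Finset (Fin 3)) from by decide,
      Finset.image_insert, Finset.image_singleton, Finset.image_singleton,
      minCutH_pair (starCap c t) {0,1} {2} {0,1} {0,1,3} (by decide) (by decide) (by decide)
        (by decide) (by decide)]
    have e1 : cutCap (starCap c t) ({0,1} : Finset (Fin 4))
        = minCut c {t 0} {t 1, t 2} + minCut c {t 1} {t 0, t 2} := by
      rw [cutCap, show ({0,1} : Finset (Fin 4))ᶜ = ({2,3} : Finset (Fin 4)) from by decide,
        Finset.sum_insert (by decide), Finset.sum_singleton, Finset.sum_insert (by decide),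
        Finset.sum_singleton, Finset.sum_insert (by decide), Finset.sum_singleton,
        hz02, hz12, hs03, hs13]
      ring
    have e2 : cutCap (starCap c t) ({0,1,3} : Finset (Fin 4)) = minCut c {t 0, t 1} {t 2} := by
      rw [cutCap, show ({0,1,3} : Finset (Fin 4))ᶜ = ({2} : Finset (Fin 4)) from by decide,
        Finset.sum_insert (by decide), Finset.sum_insert (by decide), Finset.sum_singleton,
        Finset.sum_singleton, Finset.sum_singleton, Finset.sum_singleton,
        hz02, hz12, hs32]
      ring
    rw [e1, e2]
    exact min_eq_right k0'
  · -- S = {0,2}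
    rw [show ({0,2} : Finset (Fin 3)).image Fin.castSucc = ({0,2} : Finset (Fin 4)) from by decide,
      show (({0,2} : Finset (Fin 3))ᶜ).image Fin.castSucc = ({1} : Finset (Fin 4)) from by decide,
      show ({0,2} : Finset (Fin 3))ᶜ = ({1} : Finset (Fin 3)) from by decide,
      Finset.image_insert, Finset.image_singleton, Finset.image_singleton,
      minCutH_pair (starCap c t) {0,2} {1} {0,2} {0,2,3} (by decide) (by decide) (by decide)
        (by decide) (by decide)]
    have e1 : cutCap (starCap c t) ({0,2} : Finset (Fin 4))
        = minCut c {t 0} {t 1, t 2} + minCut c {t 2} {t 0, t 1} := by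
      rw [cutCap, show ({0,2} : Finset (Fin 4))ᶜ = ({1,3} : Finset (Fin 4)) from by decide,
        Finset.sum_insert (by decide), Finset.sum_singleton, Finset.sum_insert (by decide),
        Finset.sum_singleton, Finset.sum_insert (by decide), Finset.sum_singleton,
        hz01, hz21, hs03, hs23]
      ring
    have e2 : cutCap (starCap c t) ({0,2,3} : Finset (Fin 4)) = minCut c {t 0, t 2} {t 1} := by
      rw [cutCap, show ({0,2,3} : Finset (Fin 4))ᶜ = ({1} : Finset (Fin 4)) from by decide,
        Finset.sum_insert (by decide), Finset.sum_insert (by decide), Finset.sum_singleton,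
        Finset.sum_singleton, Finset.sum_singleton, Finset.sum_singleton,
        hz01, hz21, hs31]
      ring
    rw [e1, e2]
    exact min_eq_right k1'
  · -- S = {1,2}
    rw [show ({1,2} : Finset (Fin 3)).image Fin.castSucc = ({1,2} : Finset (Fin 4)) from by decide,
      show (({1,2} : Finset (Fin 3))ᶜ).image Fin.castSucc = ({0} : Finset (Fin 4)) from by decide,
      show ({1,2} : Finset (Fin 3))ᶜ = ({0} : Finset (Fin 3)) from by decide,
      Finset.image_insert, Finset.image_singleton, Finset.image_singleton,
      minCutH_pair (starCap c t) {1,2} {0} {1,2} {1,2,3} (by decide) (by decide) (by decide)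
        (by decide) (by decide)]
    have e1 : cutCap (starCap c t) ({1,2} : Finset (Fin 4))
        = minCut c {t 1} {t 0, t 2} + minCut c {t 2} {t 0, t 1} := by
      rw [cutCap, show ({1,2} : Finset (Fin 4))ᶜ = ({0,3} : Finset (Fin 4)) from by decide,
        Finset.sum_insert (by decide), Finset.sum_singleton, Finset.sum_insert (by decide),
        Finset.sum_singleton, Finset.sum_insert (by decide), Finset.sum_singleton,
        hz10, hz20, hs13, hs23]
      ring
    have e2 : cutCap (starCap c t) ({1,2,3} : Finset (Fin 4)) = minCut c {t 1, t 2} {t 0} := by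
      rw [cutCap, show ({1,2,3} : Finset (Fin 4))ᶜ = ({0} : Finset (Fin 4)) from by decide,
        Finset.sum_insert (by decide), Finset.sum_insert (by decide), Finset.sum_singleton,
        Finset.sum_singleton, Finset.sum_singleton, Finset.sum_singleton,
        hz10, hz20, hs30]
      ring
    rw [e1, e2]
    exact min_eq_right k2'

noncomputable def starFlow (x : Fin 3 → ℝ) : Fin 4 → Fin 4 → ℝ := fun u v =>
  if hu : u.val < 3 then (if v = 3 then max (x ⟨u.val, hu⟩) 0 else 0)
  else if hv : v.val < 3 then max (-x ⟨v.val, hv⟩) 0 else 0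

lemma max_sub_max_neg (y : ℝ) : max y 0 - max (-y) 0 = y := by
  rcases le_total y 0 with h | h
  · rw [max_eq_right h, max_eq_left (by linarith)]; ring
  · rw [max_eq_left h, max_eq_right (by linarith)]; ring

lemma starFlow_netOut_0 (x : Fin 3 → ℝ) : netOut (starFlow x) 0 = x 0 := by
  unfold netOut
  rw [Fin.sum_univ_four, Fin.sum_univ_four,
    show starFlow x 0 0 = 0 from rfl, show starFlow x 0 1 = 0 from rfl,
    show starFlow x 0 2 = 0 from rfl, show starFlow x 0 3 = max (x 0) 0 from rfl,
    show starFlow x 1 0 = 0 from rfl, show starFlow x 2 0 = 0 from rfl,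
    show starFlow x 3 0 = max (-x 0) 0 from rfl]
  have := max_sub_max_neg (x 0)
  linarith

lemma starFlow_netOut_1 (x : Fin 3 → ℝ) : netOut (starFlow x) 1 = x 1 := by
  unfold netOut
  rw [Fin.sum_univ_four, Fin.sum_univ_four,
    show starFlow x 1 0 = 0 from rfl, show starFlow x 1 1 = 0 from rfl,
    show starFlow x 1 2 = 0 from rfl, show starFlow x 1 3 = max (x 1) 0 from rfl,
    show starFlow x 0 1 = 0 from rfl, show starFlow x 2 1 = 0 from rfl,
    show starFlow x 3 1 = max (-x 1) 0 from rfl]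
  have := max_sub_max_neg (x 1)
  linarith

lemma starFlow_netOut_2 (x : Fin 3 → ℝ) : netOut (starFlow x) 2 = x 2 := by
  unfold netOut
  rw [Fin.sum_univ_four, Fin.sum_univ_four,
    show starFlow x 2 0 = 0 from rfl, show starFlow x 2 1 = 0 from rfl,
    show starFlow x 2 2 = 0 from rfl, show starFlow x 2 3 = max (x 2) 0 from rfl,
    show starFlow x 0 2 = 0 from rfl, show starFlow x 1 2 = 0 from rfl,
    show starFlow x 3 2 = max (-x 2) 0 from rfl]
  have := max_sub_max_neg (x 2)
  linarith

lemma starFlow_netOut_3 (x : Fin 3 → ℝ) (hsum : x 0 + x 1 + x 2 = 0) :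
    netOut (starFlow x) 3 = 0 := by
  unfold netOut
  rw [Fin.sum_univ_four, Fin.sum_univ_four,
    show starFlow x 3 0 = max (-x 0) 0 from rfl, show starFlow x 3 1 = max (-x 1) 0 from rfl,
    show starFlow x 3 2 = max (-x 2) 0 from rfl, show starFlow x 3 3 = 0 from rfl,
    show starFlow x 0 3 = max (x 0) 0 from rfl, show starFlow x 1 3 = max (x 1) 0 from rfl,
    show starFlow x 2 3 = max (x 2) 0 from rfl]
  have h0 := max_sub_max_neg (x 0)
  have h1 := max_sub_max_neg (x 1)
  have h2 := max_sub_max_neg (x 2)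
  linarith

lemma image_compl_singleton {t : Fin 3 → V} (ht : Function.Injective t) (i : Fin 3) :
    (({i} : Finset (Fin 3))ᶜ).image t = (Finset.univ.image t) \ {t i} := by
  ext v
  simp only [Finset.mem_image, Finset.mem_compl, Finset.mem_singleton, Finset.mem_sdiff,
    Finset.mem_univ, true_and]
  constructor
  · rintro ⟨j, hj, rfl⟩
    exact ⟨⟨j, rfl⟩, fun h => hj (ht h)⟩
  · rintro ⟨⟨j, rfl⟩, hv⟩
    exact ⟨j, fun h => hv (by rw [h]), rfl⟩

lemma forward_dir (c : V → V → ℝ) (hc : ∀ u v, 0 ≤ c u v) (t : Fin 3 → V)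
    (ht : Function.Injective t) (x : Fin 3 → ℝ) (f : V → V → ℝ) (hf : IsExtFlow c f t x) :
    ∃ g, IsExtFlow (starCap c t) g Fin.castSucc x := by
  have hsumx : ∑ i, x i = 0 := extflow_sum_eq_zero ht hf
  have hsum3 : x 0 + x 1 + x 2 = 0 := by rwa [Fin.sum_univ_three] at hsumx
  have hxle : ∀ i : Fin 3, x i ≤ minCut c {t i} ((Finset.univ.image t) \ {t i}) := by
    intro i
    have h := extflow_le_minCut ht hf {i}
    rwa [Finset.sum_singleton, Finset.image_singleton, image_compl_singleton ht i] at h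
  have hxge : ∀ i : Fin 3, -x i ≤ minCut c ((Finset.univ.image t) \ {t i}) {t i} := by
    intro i
    have h := extflow_le_minCut ht hf ({i} : Finset (Fin 3))ᶜ
    rw [compl_compl, Finset.image_singleton, image_compl_singleton ht i] at h
    have hs : ∑ j ∈ ({i} : Finset (Fin 3))ᶜ, x j = -x i := by
      have h2 := Finset.sum_add_sum_compl ({i} : Finset (Fin 3)) x
      rw [hsumx, Finset.sum_singleton] at h2
      linarith
    rwa [hs] at h
  refine ⟨starFlow x, ⟨?_, ?_, ?_⟩⟩
  · intro u v
    unfold starFlow starCap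
    by_cases hu : u.val < 3
    · rw [dif_pos hu, dif_pos hu]
      by_cases hv : v = 3
      · rw [if_pos hv, if_pos hv]
        exact ⟨le_max_right _ _, max_le (hxle _) (minCut_nonneg c hc _ _)⟩
      · rw [if_neg hv, if_neg hv]
        exact ⟨le_refl 0, le_refl 0⟩
    · rw [dif_neg hu, dif_neg hu]
      by_cases hv : v.val < 3
      · rw [dif_pos hv, dif_pos hv]
        exact ⟨le_max_right _ _, max_le (hxge _) (minCut_nonneg c hc _ _)⟩
      · rw [dif_neg hv, dif_neg hv]
        exact ⟨le_refl 0, le_refl 0⟩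
  · intro v hv
    have hall : ∀ v : Fin 4, (¬ v = 3) → ∃ i : Fin 3, Fin.castSucc i = v := by decide
    by_cases hv3 : v = 3
    · subst hv3
      exact starFlow_netOut_3 x hsum3
    · obtain ⟨i, hi⟩ := hall v hv3
      exact absurd hi (hv i)
  · intro i
    have h3 : ∀ i : Fin 3, i = 0 ∨ i = 1 ∨ i = 2 := by decide
    rcases h3 i with rfl | rfl | rfl
    · rw [show Fin.castSucc (0 : Fin 3) = (0 : Fin 4) from rfl]
      exact starFlow_netOut_0 x
    · rw [show Fin.castSucc (1 : Fin 3) = (1 : Fin 4) from rfl]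
      exact starFlow_netOut_1 x
    · rw [show Fin.castSucc (2 : Fin 3) = (2 : Fin 4) from rfl]
      exact starFlow_netOut_2 x

lemma backward_dir (c : V → V → ℝ) (hc : ∀ u v, 0 ≤ c u v) (t : Fin 3 → V)
    (ht : Function.Injective t) (x : Fin 3 → ℝ) (g : Fin 4 → Fin 4 → ℝ)
    (hg : IsExtFlow (starCap c t) g Fin.castSucc x) :
    ∃ f, IsExtFlow c f t x := by
  have hcs : Function.Injective (Fin.castSucc : Fin 3 → Fin 4) := Fin.castSucc_injective 3
  have hsumx : ∑ i, x i = 0 := extflow_sum_eq_zero hcs hg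
  apply gale c hc t ht x hsumx
  intro S hne hnu
  have h := extflow_le_minCut hcs hg S
  rwa [part1 c hc t ht S hne hnu] at h

end StmtAux

theorem stmt5 {V : Type} [Fintype V] [DecidableEq V] (c : V → V → ℝ)
    (hc : ∀ u v, 0 ≤ c u v) (t : Fin 3 → V) (ht : Function.Injective t) :
    (∀ S : Finset (Fin 3), S.Nonempty → S ≠ Finset.univ →
      minCut (starCap c t) (S.image Fin.castSucc) (Sᶜ.image Fin.castSucc) =
        minCut c (S.image t) (Sᶜ.image t)) ∧
    (∀ x : Fin 3 → ℝ,
      (∃ f, IsExtFlow c f t x) ↔ ∃ g, IsExtFlow (starCap c t) g Fin.castSucc x) := by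
  constructor
  · exact part1 c hc t ht
  · intro x
    constructor
    · rintro ⟨f, hf⟩
      exact forward_dir c hc t ht x f hf
    · rintro ⟨g, hg⟩
      exact backward_dir c hc t ht x g hg
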